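/- Suppose H(θ) ≥ θ·h_m + (p' ∫₀¹ D(u)^{p'−1} g(u) du)^{1/p'}. Then for every c > −h_m the traveling-wave problem with speed c has no solution. If moreover the inequality is strict, then the traveling-wave problem with speed c has no solution for any c ≥ −h_m. -/

import Mathlib

open Set MeasureTheory Filter

/-- The conjugate exponent `p' = p/(p-1)`. -/
noncomputable def pconj (p : ℝ) : ℝ := p / (p - 1)

/-- The constant `k(p)` from the paper. -/
noncomputable def kfun (p : ℝ) : ℝ :=
  if p < 2 then 1 / (2 ^ (pconj p - 1) - 1)
  else if p = 2 then 1
  else pconj p / (pconj p - 1 +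
    (1 + pconj p * (pconj p - 1) ^ ((1 : ℝ) / (pconj p - 2)) +
      (pconj p - 1) ^ (pconj p / (pconj p - 2))) /
    (1 + (pconj p - 1) ^ ((1 : ℝ) / (pconj p - 2))) ^ pconj p)

/-- Standing assumptions on the data `p, θ, D, H, h, g` (combustion setting). -/
structure CombSetup (p θ : ℝ) (D H h g : ℝ → ℝ) : Prop where
  hp : 1 < p
  hθ0 : 0 < θ
  hθ1 : θ < 1
  hD : ContDiffOn ℝ 1 D (Ioo 0 1)
  hDpos : ∀ v ∈ Ioo (0 : ℝ) 1, 0 < D v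
  hH : ContDiffOn ℝ 1 H (Icc 0 1)
  hH0 : H 0 = 0
  hh : ContinuousOn h (Icc 0 1)
  hHd : ∀ v ∈ Icc (0 : ℝ) 1, HasDerivWithinAt H (h v) (Icc 0 1) v
  hgc : ContinuousOn g (Icc 0 1)
  hg0 : ∀ v ∈ Icc (0 : ℝ) θ, g v = 0
  hgpos : ∀ v ∈ Ioo θ 1, 0 < g v
  hg1 : g 1 = 0
  hInt : IntegrableOn (fun v => D v ^ (pconj p - 1) * g v) (Ioo 0 1)

/-- The diffusive flux `ξ ↦ D(u(ξ)) |u'(ξ)|^{p-2} u'(ξ)`. -/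
noncomputable def flux (p : ℝ) (D u : ℝ → ℝ) : ℝ → ℝ :=
  fun ξ => D (u ξ) * (|deriv u ξ| ^ (p - 2) * deriv u ξ)

/-- Solution of the traveling-wave problem with speed `c`. -/
structure IsTWSol (p c : ℝ) (D h g : ℝ → ℝ) (u : ℝ → ℝ) : Prop where
  cont : Continuous u
  mem : ∀ ξ, u ξ ∈ Icc (0 : ℝ) 1
  smooth : ContDiffOn ℝ 1 u {ξ | u ξ ∈ Ioo (0 : ℝ) 1}
  eqn : ∀ ξ ∈ {ξ | u ξ ∈ Ioo (0 : ℝ) 1},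
    HasDerivAt (flux p D u) (-(c + h (u ξ)) * deriv u ξ - g (u ξ)) ξ
  flux_cont : Continuous (fun ξ => if u ξ ∈ Ioo (0 : ℝ) 1 then flux p D u ξ else 0)
  flux_to0 : ∀ ε > 0, ∃ δ > 0, ∀ ξ, u ξ ∈ Ioo (0 : ℝ) 1 → u ξ < δ → |flux p D u ξ| < ε
  flux_to1 : ∀ ε > 0, ∃ δ > 0, ∀ ξ, u ξ ∈ Ioo (0 : ℝ) 1 → 1 - δ < u ξ → |flux p D u ξ| < ε
  lim_bot : Tendsto u atBot (nhds 1)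
  lim_top : Tendsto u atTop (nhds 0)

/-- Positive solution of the first-order problem with parameter `c`. -/
structure IsFOSol (p c : ℝ) (D h g : ℝ → ℝ) (y : ℝ → ℝ) : Prop where
  cont : ContinuousOn y (Icc 0 1)
  eqn : ∀ v ∈ Ioo (0 : ℝ) 1, HasDerivAt y
    (pconj p * ((c + h v) * (max (y v) 0) ^ (1 / p) - D v ^ (pconj p - 1) * g v)) v
  y0 : y 0 = 0
  y1 : y 1 = 0
  pos : ∀ v ∈ Ioo (0 : ℝ) 1, 0 < y v

lemma pconj_gt_one {p : ℝ} (hp : 1 < p) : 1 < pconj p := by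
  rw [pconj, lt_div_iff₀ (by linarith)]; linarith

lemma pconj_mul {p : ℝ} (hp : 1 < p) : (p - 1) * (pconj p - 1) = 1 := by
  have h : p - 1 ≠ 0 := by linarith
  rw [pconj]; field_simp; ring

lemma continuous_maxrpow {q : ℝ} (hq : 1 < q) :
    Continuous (fun x : ℝ => max x 0 ^ q) := by
  rw [continuous_iff_continuousAt]
  intro x
  exact (Real.continuousAt_rpow_const _ _ (Or.inr (by linarith))).comp
    ((continuous_id.max continuous_const).continuousAt)

/-- derivative of `x ↦ (max x 0)^q` for `q > 1`. -/
lemma hasDerivAt_maxrpow {q : ℝ} (hq : 1 < q) (x : ℝ) :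
    HasDerivAt (fun x : ℝ => max x 0 ^ q) (q * max x 0 ^ (q - 1)) x := by
  rcases lt_trichotomy x 0 with hx | hx | hx
  · have h0 : (fun x : ℝ => max x 0 ^ q) =ᶠ[nhds x] fun _ => (0:ℝ) ^ q := by
      filter_upwards [eventually_lt_nhds hx] with y hy
      rw [max_eq_right hy.le]
    have h := (hasDerivAt_const x ((0:ℝ) ^ q)).congr_of_eventuallyEq h0
    rw [max_eq_right hx.le, Real.zero_rpow (by linarith : q - 1 ≠ 0), mul_zero]
    exact h
  · subst hx
    rw [max_self, Real.zero_rpow (by linarith : q - 1 ≠ 0), mul_zero]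
    rw [hasDerivAt_iff_tendsto_slope]
    have key : ∀ y : ℝ, |slope (fun x : ℝ => max x 0 ^ q) 0 y| ≤ |y| ^ (q - 1) := by
      intro y
      rcases le_or_gt y 0 with h | h
      · rw [slope_def_field, max_eq_right h, max_self, Real.zero_rpow (by linarith : q ≠ 0)]
        simp [Real.rpow_nonneg (abs_nonneg y)]
      · rw [slope_def_field, max_eq_left h.le, max_self,
          Real.zero_rpow (by linarith : q ≠ 0), sub_zero, sub_zero,
          abs_of_nonneg (div_nonneg (Real.rpow_nonneg h.le q) h.le), abs_of_pos h,
          div_le_iff₀ h]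
        rw [← Real.rpow_add_one h.ne']
        ring_nf
        exact le_refl _
    have hlim : Tendsto (fun y : ℝ => |y| ^ (q - 1)) (nhds 0) (nhds 0) := by
      have : ContinuousAt (fun y : ℝ => |y| ^ (q - 1)) 0 :=
        (Real.continuousAt_rpow_const _ _ (Or.inr (by linarith))).comp
          continuous_abs.continuousAt
      simpa [Real.zero_rpow (by linarith : q - 1 ≠ 0)] using this.tendsto
    exact squeeze_zero_norm (fun y => key y) (hlim.mono_left nhdsWithin_le_nhds)
  · have h0 : (fun x : ℝ => max x 0 ^ q) =ᶠ[nhds x] fun y => y ^ q := by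
      filter_upwards [eventually_gt_nhds hx] with y hy
      rw [max_eq_left hy.le]
    have h := (Real.hasDerivAt_rpow_const (p := q) (Or.inl hx.ne')).congr_of_eventuallyEq h0
    rw [max_eq_left hx.le]
    exact h

theorem key (p θ : ℝ) (D H h g : ℝ → ℝ) (S : CombSetup p θ D H h g)
    (c : ℝ) (hc : -sInf (h '' Icc 0 1) ≤ c) (u : ℝ → ℝ) (hu : IsTWSol p c D h g u) :
    c * θ + H θ ≤ (pconj p * ∫ v in Ioo (0 : ℝ) 1, D v ^ (pconj p - 1) * g v) ^ (1 / pconj p) := by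
  have hp1 : 1 < p := S.hp
  have hq1 : 1 < pconj p := pconj_gt_one hp1
  have hq0 : 0 < pconj p := by linarith
  set q : ℝ := pconj p with hqdef
  set f : ℝ → ℝ := fun v => D v ^ (q - 1) * g v with hfdef
  set Φ : ℝ → ℝ := fun ξ => if u ξ ∈ Ioo (0 : ℝ) 1 then flux p D u ξ else 0 with hΦdef
  set G : ℝ → ℝ := fun t => q * ∫ v in θ..t, f v with hGdef
  set F : ℝ → ℝ := fun x => max x 0 ^ q with hFdef
  set w : ℝ → ℝ := fun ξ => F (-Φ ξ) with hwdef
  set φ : ℝ → ℝ := fun ξ => w ξ + G (u ξ) with hφdef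
  -- basic facts
  have hθIoo : θ ∈ Ioo (0:ℝ) 1 := ⟨S.hθ0, S.hθ1⟩
  have hU : IsOpen {ξ | u ξ ∈ Ioo (0 : ℝ) 1} := isOpen_Ioo.preimage hu.cont
  have huder : ∀ ξ, u ξ ∈ Ioo (0:ℝ) 1 → HasDerivAt u (deriv u ξ) ξ := by
    intro ξ hξ
    exact ((hu.smooth.contDiffAt (hU.mem_nhds hξ)).differentiableAt one_ne_zero).hasDerivAt
  have hΦeq : ∀ ξ, u ξ ∈ Ioo (0:ℝ) 1 → Φ ξ = flux p D u ξ := fun ξ hξ => if_pos hξ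
  have hΦder : ∀ ξ, u ξ ∈ Ioo (0:ℝ) 1 →
      HasDerivAt Φ (-(c + h (u ξ)) * deriv u ξ - g (u ξ)) ξ := by
    intro ξ hξ
    refine (hu.eqn ξ hξ).congr_of_eventuallyEq ?_
    filter_upwards [hU.mem_nhds hξ] with η hη using if_pos hη
  have hΦcont : Continuous Φ := hu.flux_cont
  have hm_le : ∀ v ∈ Icc (0:ℝ) 1, sInf (h '' Icc 0 1) ≤ h v := by
    intro v hv
    exact csInf_le (isCompact_Icc.image_of_continuousOn S.hh).bddBelow ⟨v, hv, rfl⟩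
  have hch : ∀ v ∈ Icc (0:ℝ) 1, 0 ≤ c + h v := by
    intro v hv; have := hm_le v hv; linarith
  have hg_nonneg : ∀ v ∈ Icc (0:ℝ) 1, 0 ≤ g v := by
    intro v hv
    rcases le_or_gt v θ with hvθ | hvθ
    · rw [S.hg0 v ⟨hv.1, hvθ⟩]
    rcases eq_or_lt_of_le hv.2 with hv1 | hv1
    · rw [hv1, S.hg1]
    · exact (S.hgpos v ⟨hvθ, hv1⟩).le
  have hf_nonneg : ∀ v ∈ Ioo (0:ℝ) 1, 0 ≤ f v :=
    fun v hv => mul_nonneg (Real.rpow_nonneg (S.hDpos v hv).le _)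
      (hg_nonneg v ⟨hv.1.le, hv.2.le⟩)
  have hfcontOn : ContinuousOn f (Ioo 0 1) := by
    apply ContinuousOn.mul
    · exact fun v hv => ((Real.continuousAt_rpow_const (D v) (q-1)
        (Or.inl (S.hDpos v hv).ne')).comp
        ((S.hD.continuousOn.continuousAt (isOpen_Ioo.mem_nhds hv)))).continuousWithinAt
    · exact S.hgc.mono (fun v hv => ⟨hv.1.le, hv.2.le⟩)
  have hfIoc : IntegrableOn f (Ioc θ 1) := by
    have h1 : IntegrableOn f (Ioo θ 1) :=
      S.hInt.mono_set (fun v hv => ⟨lt_trans S.hθ0 hv.1, hv.2⟩)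
    exact h1.congr_set_ae Ioo_ae_eq_Ioc.symm
  have hfint : ∀ t ∈ Icc θ (1:ℝ), IntervalIntegrable f volume θ t := by
    intro t ht
    rw [intervalIntegrable_iff_integrableOn_Ioc_of_le ht.1]
    exact hfIoc.mono_set (fun v hv => ⟨hv.1, le_trans hv.2 ht.2⟩)
  have hGcont : ContinuousOn G (Icc θ 1) := by
    have h1 : ContinuousOn (fun t => ∫ v in θ..t, f v) (Icc θ 1) := by
      have := intervalIntegral.continuousOn_primitive_interval'
        (μ := volume) (b₁ := θ) (b₂ := (1:ℝ)) (a := θ) (f := f)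
        (hfint 1 ⟨S.hθ1.le, le_refl 1⟩)
        (by rw [uIcc_of_le S.hθ1.le]; exact ⟨le_refl θ, S.hθ1.le⟩)
      rwa [uIcc_of_le S.hθ1.le] at this
    exact continuousOn_const.mul h1
  have hGθ : G θ = 0 := by simp [hGdef]
  have hf_nonneg1 : ∀ v ∈ Icc θ (1:ℝ), 0 ≤ f v := by
    intro v hv
    rcases eq_or_lt_of_le hv.2 with hv1 | hv1
    · simp [hfdef, hv1, S.hg1]
    · exact hf_nonneg v ⟨lt_of_lt_of_le S.hθ0 hv.1, hv1⟩
  have hG1 : ∀ t ∈ Icc θ (1:ℝ), G t ≤ G 1 := by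
    intro t ht
    have ht1 : IntervalIntegrable f volume t 1 := by
      rw [intervalIntegrable_iff_integrableOn_Ioc_of_le ht.2]
      exact hfIoc.mono_set (fun v hv => ⟨lt_of_le_of_lt ht.1 hv.1, hv.2⟩)
    have hsplit := intervalIntegral.integral_add_adjacent_intervals (hfint t ht) ht1
    have hpos : 0 ≤ ∫ v in t..1, f v := by
      apply intervalIntegral.integral_nonneg ht.2
      intro x hx
      exact hf_nonneg1 x ⟨le_trans ht.1 hx.1, hx.2⟩
    have : (∫ v in θ..t, f v) ≤ ∫ v in θ..1, f v := by rw [← hsplit]; linarith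
    exact mul_le_mul_of_nonneg_left this hq0.le
  -- the point ξ₂ where u last equals θ
  obtain ⟨ξ₂, huξ₂, hlt₂⟩ : ∃ ξ₂, u ξ₂ = θ ∧ ∀ ξ, ξ₂ < ξ → u ξ < θ := by
    set Sθ : Set ℝ := {ξ | θ ≤ u ξ} with hSθdef
    have hne : Sθ.Nonempty := by
      have h1 : ∀ᶠ ξ in atBot, θ < u ξ := hu.lim_bot.eventually (eventually_gt_nhds S.hθ1)
      obtain ⟨a, ha⟩ := h1.exists
      exact ⟨a, ha.le⟩
    have h2 : ∀ᶠ ξ in atTop, u ξ < θ := hu.lim_top.eventually (eventually_lt_nhds S.hθ0)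
    obtain ⟨b, hb⟩ := eventually_atTop.mp h2
    have hbdd : BddAbove Sθ := by
      refine ⟨b, fun z hz => ?_⟩
      by_contra hzb
      push_neg at hzb
      exact absurd hz (not_le.mpr (hb z hzb.le))
    have hcl : IsClosed Sθ := isClosed_le continuous_const hu.cont
    refine ⟨sSup Sθ, ?_, ?_⟩
    · have hmem : sSup Sθ ∈ Sθ := hcl.csSup_mem hne hbdd
      have hle : u (sSup Sθ) ≤ θ := by
        by_contra hgt
        push_neg at hgt
        have hev : ∀ᶠ ζ in nhds (sSup Sθ), θ < u ζ :=
          hu.cont.continuousAt.eventually_mem (x := sSup Sθ) (isOpen_lt continuous_const continuous_id |>.mem_nhds hgt)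
        have hev' : ∀ᶠ ζ in nhdsWithin (sSup Sθ) (Ioi (sSup Sθ)), θ < u ζ ∧ ζ ∈ Ioi (sSup Sθ) :=
          (hev.filter_mono nhdsWithin_le_nhds).and self_mem_nhdsWithin
        obtain ⟨z, hz1, hz2⟩ := hev'.exists
        exact absurd (le_csSup hbdd (hz1.le : z ∈ Sθ)) (not_le.mpr hz2)
      exact le_antisymm hle hmem
    · intro ξ hξ
      by_contra hge
      push_neg at hge
      exact absurd (le_csSup hbdd (hge : ξ ∈ Sθ)) (not_le.mpr hξ)
  have huξ₂Ioo : u ξ₂ ∈ Ioo (0:ℝ) 1 := by rw [huξ₂]; exact hθIoo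
  -- derivative of u at ξ₂ is nonpositive
  have hd₂ : deriv u ξ₂ ≤ 0 := by
    have hd := huder ξ₂ huξ₂Ioo
    rw [hasDerivAt_iff_tendsto_slope] at hd
    have hd' : Tendsto (slope u ξ₂) (nhdsWithin ξ₂ (Ioi ξ₂)) (nhds (deriv u ξ₂)) :=
      hd.mono_left (nhdsWithin_mono _ (fun z hz => ne_of_gt hz))
    refine le_of_tendsto hd' ?_
    filter_upwards [self_mem_nhdsWithin] with z hz
    rw [slope_def_field]
    apply div_nonpos_of_nonpos_of_nonneg
    · rw [huξ₂]; linarith [hlt₂ z hz]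
    · linarith [hz.out]
  have hΦξ₂ : Φ ξ₂ ≤ 0 := by
    rw [hΦeq ξ₂ huξ₂Ioo]
    simp only [flux]
    have h1 : |deriv u ξ₂| ^ (p-2) * deriv u ξ₂ ≤ 0 :=
      mul_nonpos_iff.mpr (Or.inl ⟨Real.rpow_nonneg (abs_nonneg _) _, hd₂⟩)
    exact mul_nonpos_iff.mpr (Or.inl ⟨(S.hDpos (u ξ₂) huξ₂Ioo).le, h1⟩)
  -- the function ψ is zero at ξ₂
  set ψ : ℝ → ℝ := fun ξ => Φ ξ + (c * u ξ + H (u ξ)) with hψdef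
  have hHu_cont : Continuous fun ξ => H (u ξ) :=
    S.hH.continuousOn.comp_continuous hu.cont (fun ξ => hu.mem ξ)
  have hψcont : Continuous ψ :=
    hΦcont.add ((continuous_const.mul hu.cont).add hHu_cont)
  have hψder : ∀ ξ, u ξ ∈ Ioo (0:ℝ) 1 → u ξ ≤ θ → HasDerivAt ψ 0 ξ := by
    intro ξ hmem hle
    have hgz : g (u ξ) = 0 := S.hg0 (u ξ) ⟨hmem.1.le, hle⟩
    have hd : HasDerivAt u (deriv u ξ) ξ := huder ξ hmem
    have hΦd := hΦder ξ hmem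
    have hHud : HasDerivAt (fun ξ => H (u ξ)) (h (u ξ) * deriv u ξ) ξ := by
      have hH1 : HasDerivAt H (h (u ξ)) (u ξ) :=
        (S.hHd (u ξ) ⟨hmem.1.le, hmem.2.le⟩).hasDerivAt
          (Icc_mem_nhds hmem.1 hmem.2)
      exact hH1.comp ξ hd
    have hcud : HasDerivAt (fun ξ => c * u ξ) (c * deriv u ξ) ξ := hd.const_mul c
    have htot := hΦd.add (hcud.add hHud)
    have : -(c + h (u ξ)) * deriv u ξ - g (u ξ) + (c * deriv u ξ + h (u ξ) * deriv u ξ) = 0 := by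
      rw [hgz]; ring
    rwa [this] at htot
  have hψ0 : Tendsto ψ atTop (nhds 0) := by
    have hΦ0 : Tendsto Φ atTop (nhds 0) := by
      rw [NormedAddCommGroup.tendsto_nhds_zero]
      intro ε hε
      obtain ⟨δ, hδ, hflux⟩ := hu.flux_to0 ε hε
      have hev : ∀ᶠ ξ in atTop, u ξ < δ := hu.lim_top.eventually (eventually_lt_nhds hδ)
      filter_upwards [hev] with ξ hξ
      by_cases hm : u ξ ∈ Ioo (0:ℝ) 1
      · rw [hΦeq ξ hm]; exact hflux ξ hm hξ
      · simp only [hΦdef, if_neg hm, norm_zero]; exact hε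
    have hcu : Tendsto (fun ξ => c * u ξ) atTop (nhds 0) := by
      have := hu.lim_top.const_mul c
      simpa using this
    have hHu : Tendsto (fun ξ => H (u ξ)) atTop (nhds 0) := by
      have h1 : Tendsto u atTop (nhdsWithin 0 (Icc 0 1)) :=
        tendsto_nhdsWithin_iff.mpr ⟨hu.lim_top, Eventually.of_forall hu.mem⟩
      have h2 := (S.hH.continuousOn 0 ⟨le_refl 0, zero_le_one⟩).tendsto
      have := h2.comp h1
      rwa [S.hH0] at this
    have := hΦ0.add (hcu.add hHu)
    simpa using this
  have hψξ₂ : ψ ξ₂ = 0 := by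
    -- u stays positive just after ξ₂
    have hupos : ∃ ε > 0, ∀ ζ ∈ Icc ξ₂ (ξ₂ + ε), 0 < u ζ := by
      have hev : ∀ᶠ ζ in nhds ξ₂, 0 < u ζ :=
        hu.cont.continuousAt.eventually_mem
          ((isOpen_lt continuous_const continuous_id).mem_nhds (by rw [huξ₂]; exact S.hθ0))
      obtain ⟨ε, hε, hball⟩ := Metric.eventually_nhds_iff.mp hev
      refine ⟨ε/2, by linarith, fun ζ hζ => hball ?_⟩
      rw [Real.dist_eq, abs_lt]
      constructor <;> [linarith [hζ.1]; linarith [hζ.2]]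
    obtain ⟨ε, hε, hpos⟩ := hupos
    have hconst : ∀ b, ξ₂ ≤ b → (∀ ζ ∈ Ico ξ₂ b, 0 < u ζ) → ψ b = ψ ξ₂ := by
      intro b hb hposb
      have := constant_of_has_deriv_right_zero (f := ψ) (a := ξ₂) (b := b)
        (hψcont.continuousOn) ?_ b ⟨hb, le_refl b⟩
      · exact this
      · intro x hx
        have hx0 : 0 < u x := hposb x hx
        have hxle : u x ≤ θ := by
          rcases eq_or_lt_of_le hx.1 with hxx | hxx
          · rw [← hxx, huξ₂]
          · exact (hlt₂ x hxx).le
        have hmem : u x ∈ Ioo (0:ℝ) 1 := ⟨hx0, lt_of_le_of_lt hxle S.hθ1⟩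
        exact (hψder x hmem hxle).hasDerivWithinAt
    set Z : Set ℝ := {ξ | ξ₂ < ξ ∧ u ξ = 0} with hZdef
    by_cases hZne : Z.Nonempty
    · set b := sInf Z with hbdef
      have hbddb : BddBelow Z := ⟨ξ₂, fun z hz => hz.1.le⟩
      have hub : u b = 0 := by
        have h1 : b ∈ closure Z := csInf_mem_closure hZne hbddb
        have h2 : closure Z ⊆ {ξ | u ξ = 0} :=
          closure_minimal (fun z hz => hz.2) (isClosed_eq hu.cont continuous_const)
        exact h2 h1
      have hbge : ξ₂ + ε ≤ b := by
        apply le_csInf hZne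
        intro z hz
        by_contra hzb
        push_neg at hzb
        have : 0 < u z := hpos z ⟨hz.1.le, hzb.le⟩
        rw [hz.2] at this; exact lt_irrefl 0 this
      have hposb : ∀ ζ ∈ Ico ξ₂ b, 0 < u ζ := by
        intro ζ hζ
        rcases eq_or_lt_of_le hζ.1 with hζξ | hζξ
        · rw [← hζξ, huξ₂]; exact S.hθ0
        · have hne : u ζ ≠ 0 := by
            intro h0
            exact absurd (csInf_le hbddb (⟨hζξ, h0⟩ : ζ ∈ Z)) (not_le.mpr hζ.2)
          exact lt_of_le_of_ne (hu.mem ζ).1 (Ne.symm hne)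
      have hψb : ψ b = ψ ξ₂ := hconst b (by linarith) hposb
      have : ψ b = 0 := by
        have hΦb : Φ b = 0 := by
          apply if_neg
          rw [hub]; simp
        simp only [hψdef, hΦb, hub, S.hH0, mul_zero, add_zero, zero_add]
      rw [← hψb, this]
    · -- no zero of u after ξ₂ : use the limit at +∞
      have hposall : ∀ b, ξ₂ ≤ b → ψ b = ψ ξ₂ := by
        intro b hb
        apply hconst b hb
        intro ζ hζ
        rcases eq_or_lt_of_le hζ.1 with hζξ | hζξ
        · rw [← hζξ, huξ₂]; exact S.hθ0
        · have hne : u ζ ≠ 0 := fun h0 => hZne ⟨ζ, hζξ, h0⟩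
          exact lt_of_le_of_ne (hu.mem ζ).1 (Ne.symm hne)
      have h1 : Tendsto (fun _ : ℝ => ψ ξ₂) atTop (nhds 0) := by
        refine Tendsto.congr' ?_ hψ0
        filter_upwards [eventually_ge_atTop ξ₂] with b hb
        exact hposall b hb
      exact (tendsto_nhds_unique tendsto_const_nhds h1)
  have hΦξ₂eq : Φ ξ₂ = -(c * θ + H θ) := by
    have := hψξ₂
    simp only [hψdef, huξ₂] at this
    linarith
  set A : ℝ := c * θ + H θ with hAdef
  have hA0 : 0 ≤ A := by rw [hAdef]; linarith [hΦξ₂, hΦξ₂eq]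
  have hFcont : Continuous F := continuous_maxrpow hq1
  have hwcont : Continuous w := hFcont.comp hΦcont.neg
  -- the core derivative estimate
  have hφder : ∀ ξ, θ ≤ u ξ → u ξ ≠ 1 → Φ ξ ≤ 0 →
      HasDerivAt φ (-(q * D (u ξ) ^ (q-1) * (c + h (u ξ)) * (deriv u ξ)^2)) ξ := by
    intro ξ hθle hne1 hΦle
    have hmem : u ξ ∈ Ioo (0:ℝ) 1 :=
      ⟨lt_of_lt_of_le S.hθ0 hθle, lt_of_le_of_ne (hu.mem ξ).2 hne1⟩
    have hd := huder ξ hmem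
    have hΦd := hΦder ξ hmem
    have hDv : 0 < D (u ξ) := S.hDpos _ hmem
    have hd0 : deriv u ξ ≤ 0 := by
      by_contra hpos
      push_neg at hpos
      have h1 : 0 < Φ ξ := by
        rw [hΦeq ξ hmem]
        simp only [flux]
        exact mul_pos hDv (mul_pos (Real.rpow_pos_of_pos (abs_pos.mpr hpos.ne') _) hpos)
      linarith
    have hm1 : -Φ ξ = D (u ξ) * |deriv u ξ| ^ (p-1) := by
      rw [hΦeq ξ hmem]
      simp only [flux]
      rcases eq_or_lt_of_le hd0 with hz | hz
      · rw [hz]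
        simp [Real.zero_rpow (show p - 1 ≠ 0 by linarith)]
      · have habs : |deriv u ξ| = -(deriv u ξ) := abs_of_neg hz
        have hne : |deriv u ξ| ≠ 0 := abs_ne_zero.mpr hz.ne
        rw [show |deriv u ξ| ^ (p-2) * deriv u ξ = -(|deriv u ξ| ^ (p-2) * |deriv u ξ|) by
          rw [habs]; ring]
        rw [← Real.rpow_add_one hne (p-2)]
        rw [show p - 2 + 1 = p - 1 by ring]
        ring
    have hmax : max (-Φ ξ) 0 = -Φ ξ := max_eq_left (by linarith)
    have hpow : (-Φ ξ) ^ (q - 1) = D (u ξ) ^ (q-1) * (-(deriv u ξ)) := by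
      rw [hm1, Real.mul_rpow hDv.le (Real.rpow_nonneg (abs_nonneg _) _),
        ← Real.rpow_mul (abs_nonneg _)]
      rw [hqdef, pconj_mul hp1, Real.rpow_one, abs_of_nonpos hd0]
    have hwd : HasDerivAt w
        (q * max (-Φ ξ) 0 ^ (q-1) * (-(-(c + h (u ξ)) * deriv u ξ - g (u ξ)))) ξ := by
      exact (hasDerivAt_maxrpow hq1 (-Φ ξ)).comp ξ hΦd.neg
    have hGud : HasDerivAt (fun ξ => G (u ξ)) (q * f (u ξ) * deriv u ξ) ξ := by
      have hint : IntervalIntegrable f volume θ (u ξ) := hfint (u ξ) ⟨hθle, (hu.mem ξ).2⟩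
      have hmeas := (ContinuousOn.stronglyMeasurableAtFilter (μ := volume)
        isOpen_Ioo hfcontOn) (u ξ) hmem
      have hcontf : ContinuousAt f (u ξ) := hfcontOn.continuousAt (isOpen_Ioo.mem_nhds hmem)
      have hGder : HasDerivAt G (q * f (u ξ)) (u ξ) :=
        (intervalIntegral.integral_hasDerivAt_right hint hmeas hcontf).const_mul q
      exact hGder.comp ξ hd
    have htot : HasDerivAt φ
        (q * max (-Φ ξ) 0 ^ (q-1) * (-(-(c + h (u ξ)) * deriv u ξ - g (u ξ)))
          + q * f (u ξ) * deriv u ξ) ξ := hwd.add hGud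
    have hval : q * max (-Φ ξ) 0 ^ (q-1) * (-(-(c + h (u ξ)) * deriv u ξ - g (u ξ)))
          + q * f (u ξ) * deriv u ξ
        = -(q * D (u ξ) ^ (q-1) * (c + h (u ξ)) * (deriv u ξ)^2) := by
      rw [hmax, hpow]
      simp only [hfdef]
      ring
    rwa [hval] at htot
  have hφval_nonpos : ∀ ξ, u ξ ∈ Ioo (0:ℝ) 1 →
      -(q * D (u ξ) ^ (q-1) * (c + h (u ξ)) * (deriv u ξ)^2) ≤ 0 := by
    intro ξ hmem
    have h1 : 0 ≤ D (u ξ) ^ (q-1) := Real.rpow_nonneg (S.hDpos _ hmem).le _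
    have h2 : 0 ≤ c + h (u ξ) := hch (u ξ) ⟨hmem.1.le, hmem.2.le⟩
    have h3 : 0 ≤ (deriv u ξ)^2 := sq_nonneg _
    have := mul_nonneg (mul_nonneg (mul_nonneg hq0.le h1) h2) h3
    linarith
  have hwξ₂ : w ξ₂ = A ^ q := by
    simp only [hwdef, hFdef, hΦξ₂eq, neg_neg]
    rw [max_eq_left hA0]
  have hGuξ₂ : G (u ξ₂) = 0 := by rw [huξ₂]; exact hGθ
  have hφξ₂ : φ ξ₂ = A ^ q := by
    simp only [hφdef]; rw [hwξ₂, hGuξ₂, add_zero]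
  have hleft : A ^ q ≤ G 1 := by
    set Sb : Set ℝ := {ξ | ξ < ξ₂ ∧ (u ξ < θ ∨ u ξ = 1 ∨ 0 < Φ ξ)} with hSbdef
    by_cases hSne : Sb.Nonempty
    · -- bounded case
      set ξ₁ : ℝ := sSup Sb with hξ₁def
      have hbddSb : BddAbove Sb := ⟨ξ₂, fun z hz => hz.1.le⟩
      have hξ₁le : ξ₁ ≤ ξ₂ := csSup_le hSne (fun z hz => hz.1.le)
      have hmemSb_le : ∀ z ∈ Sb, z ≤ ξ₁ := fun z hz => le_csSup hbddSb hz
      have hprop : ∀ ξ, ξ₁ < ξ → ξ < ξ₂ → θ ≤ u ξ ∧ u ξ ≠ 1 ∧ Φ ξ ≤ 0 := by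
        intro ξ hξ1 hξ2
        have hnotin : ξ ∉ Sb := fun hin => absurd (hmemSb_le ξ hin) (not_le.mpr hξ1)
        refine ⟨?_, ?_, ?_⟩
        · by_contra hcon; push_neg at hcon
          exact hnotin ⟨hξ2, Or.inl hcon⟩
        · intro h1; exact hnotin ⟨hξ2, Or.inr (Or.inl h1)⟩
        · by_contra hcon; push_neg at hcon
          exact hnotin ⟨hξ2, Or.inr (Or.inr hcon)⟩
      have huξ₁θ : θ ≤ u ξ₁ := by
        rcases eq_or_lt_of_le hξ₁le with he | hl
        · rw [he, huξ₂]
        · have hsub : Ioo ξ₁ ξ₂ ⊆ {ξ | θ ≤ u ξ} := fun ξ hξ => (hprop ξ hξ.1 hξ.2).1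
          have hcl : IsClosed {ξ | θ ≤ u ξ} := isClosed_le continuous_const hu.cont
          have hmem : ξ₁ ∈ closure (Ioo ξ₁ ξ₂) := by
            rw [closure_Ioo hl.ne]; exact ⟨le_refl _, hξ₁le⟩
          exact closure_minimal hsub hcl hmem
      have hΦξ₁ : 0 ≤ Φ ξ₁ := by
        have hclos : ξ₁ ∈ closure Sb := csSup_mem_closure hSne hbddSb
        have hsplit : Sb ⊆ (Sb ∩ {ξ | u ξ < θ}) ∪
            ((Sb ∩ {ξ | u ξ = 1}) ∪ (Sb ∩ {ξ | 0 < Φ ξ})) := by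
          intro z hz
          rcases hz.2 with h | h | h
          exacts [Or.inl ⟨hz, h⟩, Or.inr (Or.inl ⟨hz, h⟩), Or.inr (Or.inr ⟨hz, h⟩)]
        have hmem3 := closure_mono hsplit hclos
        rw [closure_union, closure_union] at hmem3
        rcases hmem3 with hA | hB | hC
        · -- approached by points where u < θ
          have huθ : u ξ₁ = θ := by
            have h1 : closure (Sb ∩ {ξ | u ξ < θ}) ⊆ {ξ | u ξ ≤ θ} :=
              closure_minimal (fun z hz => (le_of_lt hz.2 : u z ≤ θ)) (isClosed_le hu.cont continuous_const)
            exact le_antisymm (h1 hA) huξ₁θ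
          have hmem : u ξ₁ ∈ Ioo (0:ℝ) 1 := by rw [huθ]; exact hθIoo
          have hd := huder ξ₁ hmem
          have hTsub : (Sb ∩ {ξ | u ξ < θ}) ⊆ {ξ₁}ᶜ := by
            intro z hz hzeq
            rw [mem_singleton_iff] at hzeq
            have h2 : u z < θ := hz.2
            rw [hzeq, huθ] at h2
            exact lt_irrefl θ h2
          have hnb : NeBot (nhdsWithin ξ₁ (Sb ∩ {ξ | u ξ < θ})) :=
            mem_closure_iff_nhdsWithin_neBot.mp hA
          have hslope := (hasDerivAt_iff_tendsto_slope.mp hd).mono_left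
            (nhdsWithin_mono _ hTsub)
          have hge : 0 ≤ deriv u ξ₁ := by
            refine ge_of_tendsto hslope ?_
            filter_upwards [self_mem_nhdsWithin] with z hz
            rw [slope_def_field]
            have hz1 : z ≤ ξ₁ := hmemSb_le z hz.1
            have hzne : z ≠ ξ₁ := hTsub hz
            have hz2 : z - ξ₁ < 0 := sub_neg.mpr (lt_of_le_of_ne hz1 hzne)
            have hz3 : u z - u ξ₁ < 0 := by rw [huθ]; exact sub_neg.mpr hz.2
            exact le_of_lt (div_pos_of_neg_of_neg hz3 hz2)
          rw [hΦeq ξ₁ hmem]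
          simp only [flux]
          exact mul_nonneg (S.hDpos _ hmem).le
            (mul_nonneg (Real.rpow_nonneg (abs_nonneg _) _) hge)
        · have hu1 : u ξ₁ = 1 :=
            closure_minimal (fun z hz => hz.2) (isClosed_eq hu.cont continuous_const) hB
          have hΦ1 : Φ ξ₁ = 0 := by
            simp only [hΦdef]
            rw [if_neg]
            rw [hu1]; simp
          rw [hΦ1]
        · have h1 : closure (Sb ∩ {ξ | 0 < Φ ξ}) ⊆ {ξ | 0 ≤ Φ ξ} :=
            closure_minimal (fun z hz => (le_of_lt hz.2 : 0 ≤ Φ z)) (isClosed_le continuous_const hΦcont)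
          exact h1 hC
      have hwξ₁ : w ξ₁ = 0 := by
        simp only [hwdef, hFdef]
        rw [max_eq_right (neg_nonpos.mpr hΦξ₁), Real.zero_rpow (by linarith : q ≠ 0)]
      have hmaps : MapsTo u (Icc ξ₁ ξ₂) (Icc θ 1) := by
        intro ξ hξ
        rcases eq_or_lt_of_le hξ.1 with he | hl
        · rw [← he]; exact ⟨huξ₁θ, (hu.mem ξ₁).2⟩
        rcases eq_or_lt_of_le hξ.2 with he2 | hl2
        · rw [he2, huξ₂]; exact ⟨le_refl _, S.hθ1.le⟩
        · exact ⟨(hprop ξ hl hl2).1, (hu.mem ξ).2⟩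
      have hcontφ : ContinuousOn φ (Icc ξ₁ ξ₂) :=
        (hwcont.continuousOn).add (hGcont.comp hu.cont.continuousOn hmaps)
      have hanti : AntitoneOn φ (Icc ξ₁ ξ₂) := by
        apply antitoneOn_of_deriv_nonpos (convex_Icc _ _) hcontφ
        · intro ξ hξ
          rw [interior_Icc] at hξ
          obtain ⟨h1, h2, h3⟩ := hprop ξ hξ.1 hξ.2
          exact (hφder ξ h1 h2 h3).differentiableAt.differentiableWithinAt
        · intro ξ hξ
          rw [interior_Icc] at hξ
          obtain ⟨h1, h2, h3⟩ := hprop ξ hξ.1 hξ.2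
          rw [(hφder ξ h1 h2 h3).deriv]
          exact hφval_nonpos ξ ⟨lt_of_lt_of_le S.hθ0 h1, lt_of_le_of_ne (hu.mem ξ).2 h2⟩
      have h2 := hanti (left_mem_Icc.mpr hξ₁le) (right_mem_Icc.mpr hξ₁le) hξ₁le
      have h3 : φ ξ₁ = G (u ξ₁) := by simp only [hφdef]; rw [hwξ₁, zero_add]
      have h4 : G (u ξ₁) ≤ G 1 := hG1 _ ⟨huξ₁θ, (hu.mem ξ₁).2⟩
      rw [← hφξ₂]
      calc φ ξ₂ ≤ φ ξ₁ := h2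
        _ = G (u ξ₁) := h3
        _ ≤ G 1 := h4
    · -- unbounded case : u ≥ θ on all of (-∞, ξ₂)
      have hprop : ∀ ξ, ξ < ξ₂ → θ ≤ u ξ ∧ u ξ ≠ 1 ∧ Φ ξ ≤ 0 := by
        intro ξ hξ2
        have hnotin : ξ ∉ Sb := fun hin => hSne ⟨ξ, hin⟩
        refine ⟨?_, ?_, ?_⟩
        · by_contra hcon; push_neg at hcon
          exact hnotin ⟨hξ2, Or.inl hcon⟩
        · intro h1; exact hnotin ⟨hξ2, Or.inr (Or.inl h1)⟩
        · by_contra hcon; push_neg at hcon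
          exact hnotin ⟨hξ2, Or.inr (Or.inr hcon)⟩
      have hmaps : MapsTo u (Iic ξ₂) (Icc θ 1) := by
        intro ξ hξ
        rcases eq_or_lt_of_le (mem_Iic.mp hξ) with he | hl
        · rw [he, huξ₂]; exact ⟨le_refl _, S.hθ1.le⟩
        · exact ⟨(hprop ξ hl).1, (hu.mem ξ).2⟩
      have hcontφ : ContinuousOn φ (Iic ξ₂) :=
        (hwcont.continuousOn).add (hGcont.comp hu.cont.continuousOn hmaps)
      have hanti : AntitoneOn φ (Iic ξ₂) := by
        apply antitoneOn_of_deriv_nonpos (convex_Iic _) hcontφ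
        · intro ξ hξ
          rw [interior_Iic] at hξ
          obtain ⟨h1, h2, h3⟩ := hprop ξ hξ
          exact (hφder ξ h1 h2 h3).differentiableAt.differentiableWithinAt
        · intro ξ hξ
          rw [interior_Iic] at hξ
          obtain ⟨h1, h2, h3⟩ := hprop ξ hξ
          rw [(hφder ξ h1 h2 h3).deriv]
          exact hφval_nonpos ξ ⟨lt_of_lt_of_le S.hθ0 h1, lt_of_le_of_ne (hu.mem ξ).2 h2⟩
      have hΦbot : Tendsto Φ atBot (nhds 0) := by
        rw [NormedAddCommGroup.tendsto_nhds_zero]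
        intro ε hε
        obtain ⟨δ, hδ, hflux⟩ := hu.flux_to1 ε hε
        have hev : ∀ᶠ ξ in atBot, 1 - δ < u ξ :=
          hu.lim_bot.eventually (eventually_gt_nhds (by linarith))
        filter_upwards [hev] with ξ hξ
        by_cases hm : u ξ ∈ Ioo (0:ℝ) 1
        · rw [hΦeq ξ hm]; exact hflux ξ hm hξ
        · simp only [hΦdef, if_neg hm, norm_zero]; exact hε
      have hwbot : Tendsto w atBot (nhds 0) := by
        have h1 : Tendsto (fun ξ => -Φ ξ) atBot (nhds 0) := by simpa using hΦbot.neg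
        have h2 := (hFcont.continuousAt (x := 0)).tendsto.comp h1
        have hF0 : F 0 = 0 := by
          simp only [hFdef, max_self, Real.zero_rpow (by linarith : q ≠ 0)]
        rwa [hF0] at h2
      have hGbot : Tendsto (fun ξ => G (u ξ)) atBot (nhds (G 1)) := by
        have h1 : Tendsto u atBot (nhdsWithin 1 (Icc θ 1)) := by
          refine tendsto_nhdsWithin_iff.mpr ⟨hu.lim_bot, ?_⟩
          filter_upwards [eventually_lt_atBot ξ₂] with ξ hξ
          exact ⟨(hprop ξ hξ).1, (hu.mem ξ).2⟩
        exact (hGcont 1 ⟨S.hθ1.le, le_refl 1⟩).tendsto.comp h1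
      have hφbot : Tendsto φ atBot (nhds (G 1)) := by
        have := hwbot.add hGbot
        simpa using this
      have hφle : ∀ᶠ ξ in atBot, φ ξ₂ ≤ φ ξ := by
        filter_upwards [eventually_le_atBot ξ₂] with ξ hξ
        exact hanti (mem_Iic.mpr hξ) (mem_Iic.mpr (le_refl ξ₂)) hξ
      have := ge_of_tendsto hφbot hφle
      rw [← hφξ₂]
      exact this
  -- final arithmetic
  have hG1le : G 1 ≤ q * ∫ v in Ioo (0:ℝ) 1, f v := by
    have h1 : (∫ v in θ..(1:ℝ), f v) = ∫ v in Ioo θ 1, f v := by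
      rw [intervalIntegral.integral_of_le S.hθ1.le]
      exact integral_Ioc_eq_integral_Ioo
    have h2 : (∫ v in Ioo θ 1, f v) ≤ ∫ v in Ioo (0:ℝ) 1, f v := by
      apply setIntegral_mono_set S.hInt
      · exact (ae_restrict_iff' measurableSet_Ioo).mpr (ae_of_all _ hf_nonneg)
      · exact HasSubset.Subset.eventuallyLE (fun v hv => ⟨lt_trans S.hθ0 hv.1, hv.2⟩)
    simp only [hGdef]
    rw [h1]
    exact mul_le_mul_of_nonneg_left h2 hq0.le
  have hK : A ^ q ≤ q * ∫ v in Ioo (0:ℝ) 1, f v := le_trans hleft hG1le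
  have h1 : A = (A ^ q) ^ (1/q) := by
    rw [← Real.rpow_mul hA0, mul_one_div_cancel hq0.ne', Real.rpow_one]
  calc c * θ + H θ = A := hAdef.symm
    _ = (A ^ q) ^ (1/q) := h1
    _ ≤ (q * ∫ v in Ioo (0:ℝ) 1, f v) ^ (1/q) :=
        Real.rpow_le_rpow (Real.rpow_nonneg hA0 q) hK (by positivity)



/-- Theorem: Nonexistence.
If `H(θ) ≥ θ·h_m + (p' ∫₀¹ D^{p'-1} g)^{1/p'}`, the traveling-wave problem has no
solution for any `c > -h_m`; with strict inequality, no solution for any `c ≥ -h_m`. -/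
theorem stmt0 (p θ : ℝ) (D H h g : ℝ → ℝ) (S : CombSetup p θ D H h g)
    (hmain : θ * sInf (h '' Icc 0 1) +
      (pconj p * ∫ v in Ioo (0 : ℝ) 1, D v ^ (pconj p - 1) * g v) ^ (1 / pconj p) ≤ H θ) :
    (∀ c : ℝ, -sInf (h '' Icc 0 1) < c → ∀ u : ℝ → ℝ, ¬ IsTWSol p c D h g u) ∧
    (θ * sInf (h '' Icc 0 1) +
        (pconj p * ∫ v in Ioo (0 : ℝ) 1, D v ^ (pconj p - 1) * g v) ^ (1 / pconj p) < H θ →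
      ∀ c : ℝ, -sInf (h '' Icc 0 1) ≤ c → ∀ u : ℝ → ℝ, ¬ IsTWSol p c D h g u) := by
  constructor
  · intro c hcgt u hu
    have hk := key p θ D H h g S c (le_of_lt hcgt) u hu
    have h1 : -sInf (h '' Icc 0 1) * θ < c * θ := mul_lt_mul_of_pos_right hcgt S.hθ0
    nlinarith [hk, hmain, h1]
  · intro hstrict c hcge u hu
    have hk := key p θ D H h g S c hcge u hu
    have h1 : -sInf (h '' Icc 0 1) * θ ≤ c * θ := mul_le_mul_of_nonneg_right hcge S.hθ0.le
    nlinarith [hk, hstrict, h1]
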